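/- arXiv:2209.11382 — 2 statements merged into one kernel-verified Lean document; each statement's English description precedes it below -/
import Mathlib

section
/- Let K ≥ 1 be an integer and R_1, …, R_K positive reals, with t_k := 2^{R_k} − 1, and let L be the K×K lower-triangular matrix with L_{kk} = 1/t_k, L_{kj} = −1 for k > j and L_{kj} = 0 for k < j. Define the K×K matrix B by B_{ij} = 0 for i < j, B_{ii} = t_i, and B_{ij} = t_i · t_j · Π_{l=j+1}^{i−1} 2^{R_l} for i > j. Then L · B = I; hence L is invertible with L^{−1} = B, and every entry of L^{−1} on or below the diagonal is strictly positive. -/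
/-- Telescoping product identity. -/
lemma tele_aux {ι : Type*} [LinearOrder ι] (x : ι → ℝ) (s : Finset ι) :
    ∑ m ∈ s, x m * ∏ l ∈ s.filter (· < m), (x l + 1)
      = ∏ l ∈ s, (x l + 1) - 1 := by
  classical
  induction s using Finset.induction_on_max with
  | empty => simp
  | insert a s ha ih =>
    have hans : a ∉ s := fun h => lt_irrefl a (ha a h)
    rw [Finset.sum_insert hans, Finset.prod_insert hans]
    have hfa : (insert a s).filter (· < a) = s := by
      ext l
      simp only [Finset.mem_filter, Finset.mem_insert]
      constructor
      · rintro ⟨rfl | hl, hlt⟩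
        · exact absurd hlt (lt_irrefl _)
        · exact hl
      · intro hl; exact ⟨Or.inr hl, ha l hl⟩
    have hsum : ∑ m ∈ s, x m * ∏ l ∈ (insert a s).filter (· < m), (x l + 1)
        = ∑ m ∈ s, x m * ∏ l ∈ s.filter (· < m), (x l + 1) := by
      refine Finset.sum_congr rfl fun m hm => ?_
      congr 1
      apply Finset.prod_congr _ fun _ _ => rfl
      ext l
      simp only [Finset.mem_filter, Finset.mem_insert]
      constructor
      · rintro ⟨rfl | hl, hlt⟩
        · exact absurd (hlt.trans (ha m hm)) (lt_irrefl _)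
        · exact ⟨hl, hlt⟩
      · rintro ⟨hl, hlt⟩; exact ⟨Or.inr hl, hlt⟩
    rw [hfa, hsum, ih]
    ring

/-- Explicit inverse of the lower-triangular power-allocation matrix `L`
(equation (55) of Appendix F of the paper): `L·B = I`, so `L` is invertible
with `L⁻¹ = B`, and every entry of `L⁻¹` on or below the diagonal is
strictly positive. -/
theorem stmt_1
    (K : ℕ) (hK : 1 ≤ K) (R : Fin K → ℝ) (hR : ∀ k, 0 < R k)
    (t : Fin K → ℝ) (ht : ∀ k, t k = (2 : ℝ) ^ (R k) - 1)
    (L : Matrix (Fin K) (Fin K) ℝ)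
    (hL : ∀ k j : Fin K, L k j = if k = j then 1 / t k else if j < k then -1 else 0)
    (B : Matrix (Fin K) (Fin K) ℝ)
    (hB : ∀ i j : Fin K, B i j =
      if i < j then 0
      else if i = j then t i
      else t i * t j * ∏ l ∈ Finset.Ioo j i, (2 : ℝ) ^ (R l)) :
    L * B = 1 ∧ IsUnit L ∧ L⁻¹ = B ∧ ∀ i j : Fin K, j ≤ i → 0 < L⁻¹ i j := by
  have htpos : ∀ k, 0 < t k := by
    intro k
    rw [ht]
    have h1 : (1:ℝ) < (2:ℝ) ^ (R k) :=
      (Real.one_lt_rpow_iff_of_pos (by norm_num)).mpr (Or.inl ⟨by norm_num, hR k⟩)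
    linarith
  have htne : ∀ k, t k ≠ 0 := fun k => (htpos k).ne'
  have hP : ∀ l : Fin K, (2:ℝ) ^ (R l) = t l + 1 := by
    intro l; rw [ht]; ring
  -- main computation
  have hmul : L * B = 1 := by
    ext k j
    rw [Matrix.mul_apply]
    have hvanish : ∀ m ∈ Finset.univ, m ∉ Finset.Iic k → L k m * B m j = 0 := by
      intro m _ hm
      rw [Finset.mem_Iic, not_le] at hm
      rw [hL]
      rw [if_neg (ne_of_lt hm), if_neg (not_lt.mpr hm.le)]
      ring
    rw [← Finset.sum_subset (Finset.subset_univ (Finset.Iic k)) hvanish,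
      ← Finset.Iio_insert, Finset.sum_insert (by simp)]
    have hsub : ∑ m ∈ Finset.Iio k, L k m * B m j
        = ∑ m ∈ Finset.Ico j k, L k m * B m j := by
      refine (Finset.sum_subset ?_ ?_).symm
      · intro m hm; rw [Finset.mem_Ico] at hm; exact Finset.mem_Iio.mpr hm.2
      · intro m hm hm'
        rw [Finset.mem_Iio] at hm
        rw [Finset.mem_Ico, not_and] at hm'
        have : m < j := not_le.mp (fun h => hm' h hm)
        rw [hB, if_pos this]
        ring
    rw [hsub]
    have hLkk : L k k = 1 / t k := by rw [hL, if_pos rfl]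
    rcases lt_trichotomy k j with h | h | h
    · -- k < j
      rw [Finset.Ico_eq_empty (not_lt.mpr h.le), Finset.sum_empty,
        hB, if_pos h, hLkk]
      rw [Matrix.one_apply_ne (ne_of_lt h)]
      ring
    · -- k = j
      subst h
      rw [Finset.Ico_self, Finset.sum_empty, hB, if_neg (lt_irrefl k),
        if_pos rfl, hLkk, Matrix.one_apply_eq, one_div, inv_mul_cancel₀ (htne k)]
      norm_num
    · -- j < k
      have hIco : Finset.Ico j k = insert j (Finset.Ioo j k) :=
        (Finset.Ioo_insert_left h).symm
      have hjnot : j ∉ Finset.Ioo j k := by simp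
      rw [hIco, Finset.sum_insert hjnot]
      have hLkj : ∀ m ∈ Finset.Ioo j k, L k m * B m j = -(B m j) := by
        intro m hm
        rw [Finset.mem_Ioo] at hm
        rw [hL, if_neg (ne_of_gt hm.2), if_pos hm.2]
        ring
      have hLj : L k j = -1 := by
        rw [hL, if_neg (ne_of_gt h), if_pos h]
      have hBjj : B j j = t j := by rw [hB, if_neg (lt_irrefl j), if_pos rfl]
      have hBmj : ∀ m ∈ Finset.Ioo j k, B m j
          = t j * (t m * ∏ l ∈ Finset.Ioo j m, (t l + 1)) := by
        intro m hm
        rw [Finset.mem_Ioo] at hm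
        rw [hB, if_neg (not_lt.mpr hm.1.le), if_neg (ne_of_gt hm.1)]
        rw [Finset.prod_congr rfl fun l _ => hP l]
        ring
      have hfilter : ∀ m ∈ Finset.Ioo j k,
          (Finset.Ioo j k).filter (· < m) = Finset.Ioo j m := by
        intro m hm
        rw [Finset.mem_Ioo] at hm
        ext l
        simp only [Finset.mem_filter, Finset.mem_Ioo]
        constructor
        · rintro ⟨⟨h1, _⟩, h3⟩; exact ⟨h1, h3⟩
        · rintro ⟨h1, h2⟩; exact ⟨⟨h1, h2.trans hm.2⟩, h2⟩
      have htele : ∑ m ∈ Finset.Ioo j k, t m * ∏ l ∈ Finset.Ioo j m, (t l + 1)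
          = ∏ l ∈ Finset.Ioo j k, (t l + 1) - 1 := by
        rw [← tele_aux t (Finset.Ioo j k)]
        exact Finset.sum_congr rfl fun m hm => by rw [hfilter m hm]
      have hcomb : ∀ m ∈ Finset.Ioo j k, L k m * B m j
          = -(t j * (t m * ∏ l ∈ Finset.Ioo j m, (t l + 1))) := by
        intro m hm
        rw [hLkj m hm, hBmj m hm]
      have hsum2 : ∑ m ∈ Finset.Ioo j k, L k m * B m j
          = -(t j * (∏ l ∈ Finset.Ioo j k, (t l + 1) - 1)) := by
        rw [Finset.sum_congr rfl hcomb]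
        simp only [Finset.sum_neg_distrib, ← Finset.mul_sum, htele]
      rw [hsum2, hLkk, hLj, hBjj]
      rw [hB, if_neg (not_lt.mpr h.le), if_neg (ne_of_gt h)]
      rw [Finset.prod_congr rfl fun l _ => hP l]
      rw [Matrix.one_apply_ne (ne_of_gt h)]
      set A := ∏ l ∈ Finset.Ioo j k, (t l + 1) with hAdef
      field_simp [htne k]
      ring
  have hunit : IsUnit L := by
    rw [Matrix.isUnit_iff_isUnit_det]
    exact Matrix.isUnit_det_of_right_inverse hmul
  have hinv : L⁻¹ = B := Matrix.inv_eq_right_inv hmul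
  refine ⟨hmul, hunit, hinv, ?_⟩
  intro i j hij
  rw [hinv, hB, if_neg (not_lt.mpr hij)]
  rcases eq_or_lt_of_le hij with h | h
  · rw [if_pos h.symm]; exact htpos i
  · rw [if_neg (ne_of_gt h)]
    have : 0 < ∏ l ∈ Finset.Ioo j i, (2:ℝ) ^ (R l) :=
      Finset.prod_pos fun l _ => Real.rpow_pos_of_pos (by norm_num) _
    exact mul_pos (mul_pos (htpos i) (htpos j)) this
end

section
/- Let φ > 0, ζ > 0, S ≥ 0 be reals and n ≥ 1 an integer. Define ϱ(x) := ζ x^{n+1} (1 − φ x^{−n}) / (n φ ln(1 + ζ/(x + S))) and ℓ(x) := (x + S)(x + S + ζ) for x > 0. Then there exists x > φ^{1/n} such that ϱ(x) = ℓ(x). -/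
set_option maxHeartbeats 1000000 in
/-- Existence claim of Theorem 2 of the paper: the zero point `θ*` of
`ϱ(x) − ℓ(x)` defining the optimal transmission rate exists, with
`θ* > φ^{1/n}`. -/
theorem stmt_6
    (φ ζ S : ℝ) (hφ : 0 < φ) (hζ : 0 < ζ) (hS : 0 ≤ S)
    (n : ℕ) (hn : 1 ≤ n)
    (ϱ ℓ : ℝ → ℝ)
    (hϱ : ∀ x : ℝ, ϱ x =
      ζ * x ^ (n + 1) * (1 - φ * x ^ (-(n : ℤ))) /
        ((n : ℝ) * φ * Real.log (1 + ζ / (x + S))))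
    (hℓ : ∀ x : ℝ, ℓ x = (x + S) * (x + S + ζ)) :
    ∃ x : ℝ, φ ^ ((1 : ℝ) / (n : ℝ)) < x ∧ ϱ x = ℓ x := by
  have hn0 : (n : ℝ) ≠ 0 := by positivity
  have hnpos : (0 : ℝ) < n := by positivity
  set a : ℝ := φ ^ ((1 : ℝ) / (n : ℝ)) with ha_def
  have ha : 0 < a := Real.rpow_pos_of_pos hφ _
  have han : a ^ n = φ := by
    rw [ha_def, ← Real.rpow_natCast (φ ^ ((1:ℝ)/(n:ℝ))) n, ← Real.rpow_mul hφ.le]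
    rw [one_div, inv_mul_cancel₀ hn0, Real.rpow_one]
  clear_value a
  set b : ℝ := max (max 1 (2*φ)) (max (8*(n:ℝ)*φ + 1) (8*(n:ℝ)*φ*(S+ζ) + 1)) with hb_def
  have hb1 : (1:ℝ) ≤ b := le_trans (le_max_left _ _) (le_max_left _ _)
  have hb2φ : 2*φ ≤ b := le_trans (le_max_right _ _) (le_max_left _ _)
  have hb8 : 8*(n:ℝ)*φ + 1 ≤ b := le_trans (le_max_left _ _) (le_max_right _ _)
  have hb8' : 8*(n:ℝ)*φ*(S+ζ) + 1 ≤ b := le_trans (le_max_right _ _) (le_max_right _ _)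
  clear_value b
  have hbpos : (0:ℝ) < b := lt_of_lt_of_le one_pos hb1
  have hab : a ≤ b := by
    rcases le_or_gt a 1 with h | h
    · linarith
    · have : a ≤ a ^ n := le_self_pow₀ h.le (by omega)
      rw [han] at this
      linarith
  -- continuity of ϱ - ℓ on Icc a b
  have hcont : ContinuousOn (fun x => ϱ x - ℓ x) (Set.Icc a b) := by
    intro x hx
    have hx0 : 0 < x := lt_of_lt_of_le ha hx.1
    have hxS : 0 < x + S := by linarith
    have hlogpos : 0 < Real.log (1 + ζ / (x + S)) := by
      apply Real.log_pos
      have : 0 < ζ / (x + S) := by positivity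
      linarith
    have hca : ContinuousAt (fun x => ϱ x - ℓ x) x := by
      have h1 : ContinuousAt (fun x : ℝ => ζ * x ^ (n + 1) * (1 - φ * x ^ (-(n : ℤ))) /
          ((n : ℝ) * φ * Real.log (1 + ζ / (x + S))) - (x + S) * (x + S + ζ)) x := by
        apply ContinuousAt.sub
        · apply ContinuousAt.div
          · exact (continuousAt_const.mul (continuousAt_pow _ _)).mul
              (continuousAt_const.sub (continuousAt_const.mul
                (continuousAt_zpow₀ _ _ (Or.inl hx0.ne'))))
          · apply ContinuousAt.mul continuousAt_const
            apply ContinuousAt.comp (Real.continuousAt_log (by positivity))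
            exact continuousAt_const.add (continuousAt_const.div
              (continuousAt_id.add continuousAt_const) hxS.ne')
          · positivity
        · exact ((continuousAt_id.add continuousAt_const).mul
            ((continuousAt_id.add continuousAt_const).add continuousAt_const))
      have : (fun x => ϱ x - ℓ x) = fun x : ℝ => ζ * x ^ (n + 1) * (1 - φ * x ^ (-(n : ℤ))) /
          ((n : ℝ) * φ * Real.log (1 + ζ / (x + S))) - (x + S) * (x + S + ζ) := by
        funext y; rw [hϱ y, hℓ y]
      rw [this]
      exact h1
    exact hca.continuousWithinAt
  -- value at a is negative
  have hfa : ϱ a - ℓ a < 0 := by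
    have hza : (a : ℝ) ^ (-(n : ℤ)) = (a ^ n)⁻¹ := by
      rw [zpow_neg, zpow_natCast]
    have : ϱ a = 0 := by
      rw [hϱ a, hza, han, mul_inv_cancel₀ hφ.ne']
      simp
    rw [this, hℓ a]
    have : 0 < (a + S) * (a + S + ζ) := by positivity
    linarith
  -- value at b is positive
  have hfb : 0 < ϱ b - ℓ b := by
    have hbS : 0 < b + S := by linarith
    have hlogpos : 0 < Real.log (1 + ζ / (b + S)) := by
      apply Real.log_pos
      have : 0 < ζ / (b + S) := by positivity
      linarith
    have hDpos : 0 < (n : ℝ) * φ * Real.log (1 + ζ / (b + S)) := by positivity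
    have hDle : (n : ℝ) * φ * Real.log (1 + ζ / (b + S)) ≤ (n : ℝ) * φ * (ζ / (b + S)) := by
      apply mul_le_mul_of_nonneg_left _ (by positivity)
      have := Real.log_le_sub_one_of_pos (show (0:ℝ) < 1 + ζ / (b + S) by positivity)
      linarith
    have hzb : (b : ℝ) ^ (-(n : ℤ)) = (b ^ n)⁻¹ := by
      rw [zpow_neg, zpow_natCast]
    have hbn : 2*φ ≤ b ^ n := le_trans hb2φ (le_self_pow₀ hb1 (by omega))
    have hfac : (1:ℝ)/2 ≤ 1 - φ * b ^ (-(n : ℤ)) := by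
      rw [hzb]
      have hbnpos : 0 < b ^ n := by positivity
      have : φ * (b ^ n)⁻¹ ≤ 1/2 := by
        rw [mul_inv_le_iff₀ hbnpos]
        linarith
      linarith
    have hNge : ζ * b ^ (n+1) / 2 ≤ ζ * b ^ (n + 1) * (1 - φ * b ^ (-(n : ℤ))) := by
      have h1 : 0 ≤ ζ * b ^ (n+1) := by positivity
      nlinarith
    have hNpos : 0 < ζ * b ^ (n+1) / 2 := by positivity
    have key : ζ * b ^ (n+1) / 2 / ((n : ℝ) * φ * (ζ / (b + S))) ≤ ϱ b := by
      rw [hϱ b]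
      exact div_le_div₀ (by nlinarith) hNge hDpos hDle
    have heq : ζ * b ^ (n+1) / 2 / ((n : ℝ) * φ * (ζ / (b + S)))
        = b ^ (n+1) * (b + S) / (2 * (n : ℝ) * φ) := by
      field_simp
    rw [heq] at key
    have hb2 : b ^ 2 ≤ b ^ (n+1) := pow_le_pow_right₀ hb1 (by omega)
    have key2 : b ^ 2 * (b + S) / (2 * (n : ℝ) * φ) ≤ b ^ (n+1) * (b + S) / (2 * (n : ℝ) * φ) := by
      apply div_le_div_of_nonneg_right _ (by positivity)
      · exact mul_le_mul_of_nonneg_right hb2 hbS.le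
    have hlb : ℓ b < b ^ 2 * (b + S) / (2 * (n : ℝ) * φ) := by
      rw [hℓ b, lt_div_iff₀ (by positivity)]
      have hbb : b ≤ b ^ 2 := by
        have := mul_le_mul_of_nonneg_right hb1 hbpos.le
        have hb2eq : b ^ 2 = b * b := by ring
        linarith
      have h8 : 8*(n:ℝ)*φ ≤ b := by linarith
      have e1 : 2*(n:ℝ)*φ*b ≤ b^2/2 := by
        have := mul_le_mul_of_nonneg_right h8 hbpos.le
        have hb2eq : b ^ 2 = b * b := by ring
        linarith
      have e2 : 2*(n:ℝ)*φ*(S+ζ) < b^2/2 := by linarith [sq_nonneg b]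
      have hkey : 2*(n:ℝ)*φ*(b+S+ζ) < b^2 := by linarith [mul_pos hnpos hφ]
      calc (b+S)*(b+S+ζ)*(2*(n:ℝ)*φ) = (2*(n:ℝ)*φ*(b+S+ζ))*(b+S) := by ring
        _ < b^2*(b+S) := mul_lt_mul_of_pos_right hkey hbS
    linarith
  -- IVT
  have h0 : (0:ℝ) ∈ Set.Ioo ((fun x => ϱ x - ℓ x) a) ((fun x => ϱ x - ℓ x) b) :=
    ⟨hfa, hfb⟩
  obtain ⟨x, hx, hfx⟩ := intermediate_value_Ioo hab hcont h0
  exact ⟨x, hx.1, by linarith [sub_eq_zero.mp hfx]⟩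
end
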